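/- The Brown graph B(q) for an odd prime power q has exactly q² + q + 1 vertices, every non-quadric vertex has degree q+1, and B(q) is C4-free. -/

import Mathlib

/-- `G` contains no cycle of length 4 as a (not necessarily induced) subgraph. -/
def C4Free {V : Type*} (G : SimpleGraph V) : Prop :=
  ¬ ∃ a b c d : V, a ≠ b ∧ a ≠ c ∧ a ≠ d ∧ b ≠ c ∧ b ≠ d ∧ c ≠ d ∧
    G.Adj a b ∧ G.Adj b c ∧ G.Adj c d ∧ G.Adj d a

/-- `G` has edge-connectivity at least `k`: it stays connected after
deleting any set of fewer than `k` edges. -/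
def EdgeConnAtLeast {V : Type*} (G : SimpleGraph V) (k : ℕ) : Prop :=
  ∀ s : Finset (Sym2 V), s.card < k → (G.deleteEdges ↑s).Connected

/-- The Brown graph on the projective plane over `F`: vertices are classes of
nonzero vectors of `F³`, adjacency is orthogonality of representatives. -/
def brown (F : Type*) [Field F] : SimpleGraph (Projectivization F (Fin 3 → F)) where
  Adj x y := x ≠ y ∧ ∑ i, x.rep i * y.rep i = 0
  symm := ⟨fun x y h => ⟨h.1.symm, by
    rw [← h.2]; exact Finset.sum_congr rfl fun i _ => mul_comm _ _⟩⟩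
  loopless := ⟨fun x h => h.1 rfl⟩

/-- A vertex of the Brown graph is quadric if its representatives are self-orthogonal. -/
def IsQuadric {F : Type*} [Field F] (x : Projectivization F (Fin 3 → F)) : Prop :=
  ∑ i, x.rep i * x.rep i = 0

section Aux

open Projectivization Matrix

set_option linter.unusedSectionVars false

variable {F : Type*} [Field F] [Fintype F]

/-- In a finite type with a zero, the number of nonzero elements. -/
lemma nat_card_ne_zero (α : Type*) [Finite α] [Zero α] :
    Nat.card {v : α // v ≠ 0} = Nat.card α - 1 := by
  classical
  have h := Set.ncard_add_ncard_compl ({v : α | v ≠ 0})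
  have hc : ({v : α | v ≠ 0})ᶜ = {0} := by ext v; simp
  rw [hc, Set.ncard_singleton] at h
  have h2 : Nat.card {v : α // v ≠ 0} = ({v : α | v ≠ 0}).ncard :=
    (Nat.card_coe_set_eq _).symm
  omega

/-- The dot-product-with-`a` linear functional on `F³`. -/
def dotL (a : Fin 3 → F) : (Fin 3 → F) →ₗ[F] F where
  toFun v := ∑ i, a i * v i
  map_add' u v := by simp [mul_add, Finset.sum_add_distrib]
  map_smul' c v := by simp [Finset.mul_sum, mul_left_comm]

lemma dotL_ne_zero {a : Fin 3 → F} (ha : a ≠ 0) : dotL a ≠ 0 := by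
  obtain ⟨i, hi⟩ := Function.ne_iff.mp ha
  intro h
  apply hi
  have := congrArg (fun f => f (Pi.single i (1:F))) h
  simpa [dotL, Pi.single_apply] using this

lemma finrank_ker_dotL {a : Fin 3 → F} (ha : a ≠ 0) :
    Module.finrank F (LinearMap.ker (dotL a)) = 2 := by
  have h1 := LinearMap.finrank_range_add_finrank_ker (dotL a)
  have h3 : Module.finrank F (Fin 3 → F) = 3 := Module.finrank_fin_fun F
  have hr : Module.finrank F (LinearMap.range (dotL a)) = 1 := by
    have hle : Module.finrank F (LinearMap.range (dotL a)) ≤ 1 := by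
      simpa using Submodule.finrank_le (LinearMap.range (dotL a))
    have hne : Module.finrank F (LinearMap.range (dotL a)) ≠ 0 := by
      rw [Ne, Submodule.finrank_eq_zero, LinearMap.range_eq_bot]
      exact dotL_ne_zero ha
    omega
  omega

/-- Orbit counting: nonzero vectors in a scalar-closed set `T` come in groups of
`q - 1`, one for each projective point whose representative lies in `T`. -/
lemma card_lift (T : Set (Fin 3 → F))
    (hsmul : ∀ c : F, c ≠ 0 → ∀ v ∈ T, c • v ∈ T) :
    Nat.card {v : Fin 3 → F // v ∈ T ∧ v ≠ 0}
      = Nat.card {x : Projectivization F (Fin 3 → F) // x.rep ∈ T}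
          * (Fintype.card F - 1) := by
  classical
  set S := {x : Projectivization F (Fin 3 → F) // x.rep ∈ T} with hS
  have hrepT : ∀ v : {v : Fin 3 → F // v ∈ T ∧ v ≠ 0},
      (Projectivization.mk F v.1 v.2.2).rep ∈ T := by
    intro v
    obtain ⟨c, hc⟩ := exists_smul_eq_mk_rep F v.1 v.2.2
    rw [Units.smul_def] at hc
    rw [← hc]
    exact hsmul _ c.ne_zero _ v.2.1
  set f : {v : Fin 3 → F // v ∈ T ∧ v ≠ 0} → S :=
    fun v => ⟨Projectivization.mk F v.1 v.2.2, hrepT v⟩ with hf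
  have hfib : ∀ x : S, ∃ g : Fˣ ≃ {v // f v = x}, True := by
    intro x
    have hx0 := x.1.rep_nonzero
    set g : Fˣ → {v // f v = x} := fun c =>
      ⟨⟨(c : F) • x.1.rep, hsmul _ c.ne_zero _ x.2, smul_ne_zero c.ne_zero hx0⟩, by
        apply Subtype.ext
        show Projectivization.mk F ((c : F) • x.1.rep) _ = x.1
        conv_rhs => rw [← Projectivization.mk_rep x.1]
        exact (Projectivization.mk_eq_mk_iff' F _ _ _ _).mpr ⟨(c : F), rfl⟩⟩ with hg
    have hbij : Function.Bijective g := by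
      constructor
      · intro c c' h
        have h2 : (c : F) • x.1.rep = (c' : F) • x.1.rep := by
          have := congrArg (fun v => v.1.1) h
          simpa [hg] using this
        have h3 : ((c : F) - (c' : F)) • x.1.rep = 0 := by
          rw [sub_smul, h2, sub_self]
        rcases smul_eq_zero.mp h3 with h4 | h4
        · exact Units.ext (by linear_combination (norm := ring_nf) h4)
        · exact absurd h4 hx0
      · rintro ⟨⟨v, hvT, hv0⟩, hfv⟩
        have hmk : Projectivization.mk F v hv0 = x.1 := congrArg Subtype.val hfv
        rw [← Projectivization.mk_rep x.1] at hmk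
        obtain ⟨c, hc⟩ := (Projectivization.mk_eq_mk_iff F v x.1.rep hv0 hx0).mp hmk
        refine ⟨c, ?_⟩
        apply Subtype.ext; apply Subtype.ext
        show (c : F) • x.1.rep = v
        rw [← Units.smul_def]; exact hc
    exact ⟨Equiv.ofBijective g hbij, trivial⟩
  choose g _ using hfib
  have e : {v : Fin 3 → F // v ∈ T ∧ v ≠ 0} ≃ S × Fˣ :=
    ((Equiv.sigmaFiberEquiv f).symm.trans
      (Equiv.sigmaCongrRight fun x => (g x).symm)).trans (Equiv.sigmaEquivProd S Fˣ)
  rw [Nat.card_congr e, Nat.card_prod, Nat.card_eq_fintype_card (α := Fˣ),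
    Fintype.card_units]

/-- Two nonzero vectors orthogonal to two linearly independent vectors are parallel. -/
lemma parallel_of_orth {u w : Fin 3 → F} (h : LinearIndependent F ![u, w])
    {b d : Fin 3 → F} (hb0 : b ≠ 0)
    (hub : ∑ i, u i * b i = 0) (hwb : ∑ i, w i * b i = 0)
    (hud : ∑ i, u i * d i = 0) (hwd : ∑ i, w i * d i = 0) :
    ∃ c : F, c • b = d := by
  classical
  set M : Matrix (Fin 2) (Fin 3) F := Matrix.of ![u, w] with hM
  have hker : ∀ v : Fin 3 → F, (∑ i, u i * v i = 0) → (∑ i, w i * v i = 0) →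
      v ∈ LinearMap.ker M.mulVecLin := by
    intro v h1 h2
    rw [LinearMap.mem_ker]
    funext i
    fin_cases i
    · simpa [hM, Matrix.mulVec, dotProduct] using h1
    · simpa [hM, Matrix.mulVec, dotProduct] using h2
  have hinj : Function.Injective Mᵀ.mulVecLin := by
    rw [← LinearMap.ker_eq_bot]
    rw [Submodule.eq_bot_iff]
    intro z hz
    rw [LinearMap.mem_ker] at hz
    have hcomb : z 0 • u + z 1 • w = 0 := by
      funext j
      have := congrFun hz j
      simp [hM, Matrix.mulVec, dotProduct, Fin.sum_univ_two,
        Matrix.transpose, Matrix.vecHead, Matrix.vecTail] at this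
      simp [Fin.sum_univ_two]
      linear_combination this
    obtain ⟨h0, h1⟩ := LinearIndependent.pair_iff.mp h (z 0) (z 1) hcomb
    funext i; fin_cases i <;> assumption
  have hrT : Mᵀ.rank = 2 := by
    rw [Matrix.rank, LinearMap.finrank_range_of_inj hinj, Module.finrank_fin_fun]
  have hr : M.rank = 2 := by rw [← Matrix.rank_transpose, hrT]
  have hrn := LinearMap.finrank_range_add_finrank_ker M.mulVecLin
  have h3 : Module.finrank F (Fin 3 → F) = 3 := Module.finrank_fin_fun F
  have hkfr : Module.finrank F (LinearMap.ker M.mulVecLin) = 1 := by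
    have : M.rank = Module.finrank F (LinearMap.range M.mulVecLin) := rfl
    omega
  have hbW := hker b hub hwb
  have hdW := hker d hud hwd
  have hbne : (⟨b, hbW⟩ : LinearMap.ker M.mulVecLin) ≠ 0 := by
    intro hh; exact hb0 (congrArg Subtype.val hh)
  obtain ⟨c, hc⟩ := (finrank_eq_one_iff_of_nonzero' (⟨b, hbW⟩ : LinearMap.ker M.mulVecLin)
    hbne).mp hkfr ⟨d, hdW⟩
  exact ⟨c, congrArg Subtype.val hc⟩

lemma cancel_aux {q N : ℕ} (hq : 2 ≤ q) {M : ℕ} (h : N * (q - 1) = M * (q - 1)) :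
    N = M :=
  Nat.eq_of_mul_eq_mul_right (by omega) h

end Aux

open Projectivization in
theorem brown_order_degree_c4free (F : Type*) [Field F] [Fintype F]
    (hodd : Odd (Fintype.card F)) :
    Nat.card (Projectivization F (Fin 3 → F))
        = Fintype.card F ^ 2 + Fintype.card F + 1 ∧
    (∀ x : Projectivization F (Fin 3 → F), ¬ IsQuadric x →
        ((brown F).neighborSet x).ncard = Fintype.card F + 1) ∧
    C4Free (brown F) := by
  classical
  set q := Fintype.card F with hqdef
  have hq : 2 ≤ q := Fintype.one_lt_card
  obtain ⟨m, hm⟩ : ∃ m, q = m + 2 := ⟨q - 2, by omega⟩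
  refine ⟨?_, ?_, ?_⟩
  · -- order
    have h := card_lift (F := F) Set.univ (by intro c hc v hv; trivial)
    have hL : Nat.card {v : Fin 3 → F // v ∈ (Set.univ : Set (Fin 3 → F)) ∧ v ≠ 0}
        = q ^ 3 - 1 := by
      rw [Nat.card_congr (Equiv.subtypeEquivRight (q := fun v => v ≠ 0) (by simp)),
        nat_card_ne_zero, Nat.card_eq_fintype_card, Fintype.card_fun]
      simp [hqdef]
    have hR : Nat.card {x : Projectivization F (Fin 3 → F) //
        x.rep ∈ (Set.univ : Set (Fin 3 → F))}
        = Nat.card (Projectivization F (Fin 3 → F)) :=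
      Nat.card_congr (Equiv.subtypeUnivEquiv (by simp))
    rw [hL, hR] at h
    apply cancel_aux hq
    rw [← h]
    rw [hm]
    have e1 : (m + 2) ^ 3 = m ^ 3 + 6 * m ^ 2 + 12 * m + 8 := by ring
    have e2 : ((m + 2) ^ 2 + (m + 2) + 1) * (m + 1)
        = m ^ 3 + 6 * m ^ 2 + 12 * m + 7 := by ring
    have e3 : m + 2 - 1 = m + 1 := rfl
    rw [e3, e2]
    omega
  · -- degree
    intro x hx
    set a := x.rep with ha
    set T : Set (Fin 3 → F) := {v | ∑ i, a i * v i = 0} with hT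
    have hsmul : ∀ c : F, c ≠ 0 → ∀ v ∈ T, c • v ∈ T := by
      intro c hc v hv
      show ∑ i, a i * (c • v) i = 0
      have : ∑ i, a i * (c • v) i = c * ∑ i, a i * v i := by
        rw [Finset.mul_sum]
        exact Finset.sum_congr rfl fun i _ => by simp [mul_left_comm]
      rw [this, hv, mul_zero]
    have h := card_lift T hsmul
    -- left side: nonzero vectors of the kernel of `dotL a`
    have hTker : ∀ v : Fin 3 → F, v ∈ T ↔ v ∈ LinearMap.ker (dotL a) := by
      intro v; exact Iff.rfl
    have eL : {v : Fin 3 → F // v ∈ T ∧ v ≠ 0}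
        ≃ {y : LinearMap.ker (dotL a) // y ≠ 0} :=
      { toFun := fun v => ⟨⟨v.1, (hTker v.1).mp v.2.1⟩, by
          intro hh; exact v.2.2 (congrArg Subtype.val hh)⟩
        invFun := fun y => ⟨y.1.1, (hTker y.1.1).mpr y.1.2, fun h0 =>
          y.2 (Subtype.ext h0)⟩
        left_inv := fun v => rfl
        right_inv := fun y => rfl }
    have hW : Nat.card (LinearMap.ker (dotL a)) = q ^ 2 := by
      letI : Fintype (LinearMap.ker (dotL a)) := Fintype.ofFinite _
      rw [Nat.card_eq_fintype_card, Module.card_eq_pow_finrank (K := F),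
        finrank_ker_dotL x.rep_nonzero]
    have hL : Nat.card {v : Fin 3 → F // v ∈ T ∧ v ≠ 0} = q ^ 2 - 1 := by
      rw [Nat.card_congr eL, nat_card_ne_zero, hW]
    -- right side: the neighbor set
    have hnbr : (brown F).neighborSet x = {y | y.rep ∈ T} := by
      ext y
      constructor
      · intro hy; exact (show x ≠ y ∧ ∑ i, x.rep i * y.rep i = 0 from hy).2
      · intro hy
        show x ≠ y ∧ ∑ i, x.rep i * y.rep i = 0
        refine ⟨fun hxy => hx ?_, hy⟩
        show ∑ i, x.rep i * x.rep i = 0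
        have : y.rep ∈ T := hy
        rw [← hxy] at this
        exact this
    have hR : Nat.card {y : Projectivization F (Fin 3 → F) // y.rep ∈ T}
        = ((brown F).neighborSet x).ncard := by
      rw [hnbr]
      exact Nat.card_coe_set_eq _
    rw [hL, hR] at h
    apply cancel_aux hq
    rw [← h]
    rw [hm]
    have e2 : (m + 2 + 1) * (m + 1) = (m + 2) ^ 2 - 1 := by
      have : (m + 2) ^ 2 = m ^ 2 + 4 * m + 4 := by ring
      have : (m + 2 + 1) * (m + 1) = m ^ 2 + 4 * m + 3 := by ring
      omega
    have e3 : m + 2 - 1 = m + 1 := rfl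
    rw [e3, e2]
  · -- C4-free
    rintro ⟨a, b, c, d, hab, hac, had, hbc, hbd, hcd, Hab, Hbc, Hcd, Hda⟩
    have hind : LinearIndependent F ![a.rep, c.rep] := by
      rw [LinearIndependent.pair_iff' a.rep_nonzero]
      intro s hs
      apply hac
      have : Projectivization.mk F c.rep c.rep_nonzero
          = Projectivization.mk F a.rep a.rep_nonzero :=
        (Projectivization.mk_eq_mk_iff' F _ _ _ _).mpr ⟨s, hs⟩
      rw [Projectivization.mk_rep, Projectivization.mk_rep] at this
      exact this.symm
    have hcomm : ∀ u v : Fin 3 → F, (∑ i, u i * v i = 0) → ∑ i, v i * u i = 0 := by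
      intro u v huv
      rw [← huv]; exact Finset.sum_congr rfl fun i _ => mul_comm _ _
    obtain ⟨s, hs⟩ := parallel_of_orth hind b.rep_nonzero
      (Hab : a ≠ b ∧ ∑ i, a.rep i * b.rep i = 0).2
      (hcomm _ _ (Hbc : b ≠ c ∧ ∑ i, b.rep i * c.rep i = 0).2)
      (hcomm _ _ (Hda : d ≠ a ∧ ∑ i, d.rep i * a.rep i = 0).2)
      (Hcd : c ≠ d ∧ ∑ i, c.rep i * d.rep i = 0).2
    apply hbd
    have : Projectivization.mk F d.rep d.rep_nonzero
        = Projectivization.mk F b.rep b.rep_nonzero :=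
      (Projectivization.mk_eq_mk_iff' F _ _ _ _).mpr ⟨s, hs⟩
    rw [Projectivization.mk_rep, Projectivization.mk_rep] at this
    exact this.symm
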